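/- In the root system of type B_n with simple roots ψ_1,...,ψ_n (ψ_n short), the Kostant cascade is β_1 = ψ_1 + 2(ψ_2 + ... + ψ_n), β_2 = ψ_1, β_3 = ψ_3 + 2(ψ_4 + ... + ψ_n), β_4 = ψ_3, and so on; for even r the layer Δ+_r is empty, and for odd r, if α, α' ∈ Δ+_r with α + α' ∈ Δ then α + α' = β_r. -/

import Mathlib

/-- Standard basis vector `e_i` (indices are `1`-based). -/
def Ev (i : ℕ) : ℕ → ℝ := fun k => if k = i then 1 else 0

/-- The Euclidean inner product on the coordinates `0, …, n`. -/
def ip (n : ℕ) (x y : ℕ → ℝ) : ℝ := ∑ k ∈ Finset.range (n + 1), x k * y k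

/-- Simple roots of type `B_n`: `ψ_i = e_i - e_{i+1}` for `i < n` and `ψ_n = e_n`
(the short simple root). -/
def ψB (n i : ℕ) : ℕ → ℝ := if i = n then Ev n else Ev i - Ev (i + 1)

/-- Positive roots of type `B_n`: `e_i ± e_j` (`i < j`) and `e_i`. -/
def posB (n : ℕ) : Set (ℕ → ℝ) :=
  {v | (∃ i j : ℕ, 1 ≤ i ∧ i < j ∧ j ≤ n ∧ (v = Ev i - Ev j ∨ v = Ev i + Ev j)) ∨
       (∃ i : ℕ, 1 ≤ i ∧ i ≤ n ∧ v = Ev i)}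

/-- All roots of type `B_n`. -/
def ΔB (n : ℕ) : Set (ℕ → ℝ) := {v | v ∈ posB n ∨ -v ∈ posB n}

/-- The Kostant cascade of type `B_n`:
`β_r = ψ_r + 2(ψ_{r+1} + ⋯ + ψ_n)` for `r` odd and `β_r = ψ_{r-1}` for `r` even. -/
noncomputable def βB (n r : ℕ) : ℕ → ℝ :=
  if r % 2 = 1 then ψB n r + ∑ i ∈ Finset.Icc (r + 1) n, (2 : ℝ) • ψB n i
  else ψB n (r - 1)

/-- The layer `Δ⁺_r`: positive roots orthogonal to `β_i` for `i < r`, not orthogonal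
to `β_r`, and different from `β_r`. -/
noncomputable def LayerB (n r : ℕ) : Set (ℕ → ℝ) :=
  {α ∈ posB n | (∀ i : ℕ, 1 ≤ i → i < r → ip n α (βB n i) = 0) ∧
    0 < ip n α (βB n r) ∧ α ≠ βB n r}

lemma ip_Ev_right (n j : ℕ) (hj : j ≤ n) (x : ℕ → ℝ) : ip n x (Ev j) = x j := by
  unfold ip Ev
  rw [Finset.sum_eq_single j]
  · simp
  · intro b _ hb; simp [hb]
  · intro h; exact absurd (Finset.mem_range.2 (Nat.lt_succ_of_le hj)) h
lemma ip_add_right (n : ℕ) (x y z : ℕ → ℝ) : ip n x (y + z) = ip n x y + ip n x z := by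
  unfold ip; rw [← Finset.sum_add_distrib]; congr 1; ext k; simp [mul_add]
lemma ip_sub_right (n : ℕ) (x y z : ℕ → ℝ) : ip n x (y - z) = ip n x y - ip n x z := by
  unfold ip; rw [← Finset.sum_sub_distrib]; congr 1; ext k; simp [mul_sub]

-- telescoping sum
lemma sum_two_psi (n : ℕ) : ∀ d m, 1 ≤ m → m + d = n →
    ∑ i ∈ Finset.Icc m n, (2 : ℝ) • ψB n i = (2 : ℝ) • Ev m := by
  intro d
  induction d with
  | zero => intro m hm h; subst h; simp [ψB]
  | succ d ih =>
    intro m hm h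
    have hmn : m < n := by omega
    rw [show Finset.Icc m n = insert m (Finset.Icc (m+1) n) by
      ext x; simp [Finset.mem_Icc]; omega]
    rw [Finset.sum_insert (by simp)]
    rw [ih (m+1) (by omega) (by omega)]
    rw [ψB, if_neg (by omega)]
    ext k; simp [Ev]; split_ifs <;> ring_nf <;> simp_all
lemma βB_odd_lt (n r : ℕ) (hodd : r % 2 = 1) (hr : r < n) :
    βB n r = Ev r + Ev (r + 1) := by
  rw [βB, if_pos hodd, ψB, if_neg (by omega), sum_two_psi n (n - (r+1)) (r+1) (by omega) (by omega)]
  ext k; simp [Ev]; split_ifs <;> ring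
lemma βB_odd_eq (n : ℕ) (hodd : n % 2 = 1) : βB n n = Ev n := by
  rw [βB, if_pos hodd, ψB, if_pos rfl]
  simp [Finset.Icc_eq_empty_of_lt (by omega : n < n + 1)]
lemma βB_even (n r : ℕ) (heven : r % 2 = 0) (hr : 2 ≤ r) (hrn : r ≤ n) :
    βB n r = Ev (r - 1) - Ev r := by
  have h1 : ¬ (r % 2 = 1) := by omega
  have h2 : ¬ (r - 1 = n) := by omega
  have h3 : r - 1 + 1 = r := by omega
  rw [βB, if_neg h1, ψB, if_neg h2, h3]
lemma Ev_apply (i k : ℕ) : Ev i k = if k = i then 1 else 0 := rfl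
lemma posB_coord_le_one {n : ℕ} {v : ℕ → ℝ} (h : v ∈ posB n) (k : ℕ) : v k ≤ 1 := by
  rcases h with ⟨i,j,hi,hij,hj,hv|hv⟩|⟨i,hi,hin,hv⟩ <;> subst hv <;>
    simp only [Pi.sub_apply, Pi.add_apply, Ev_apply] <;> split_ifs <;> norm_num <;> omega
lemma posB_coord_ge {n : ℕ} {v : ℕ → ℝ} (h : v ∈ posB n) (k : ℕ) : -1 ≤ v k := by
  rcases h with ⟨i,j,hi,hij,hj,hv|hv⟩|⟨i,hi,hin,hv⟩ <;> subst hv <;>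
    simp only [Pi.sub_apply, Pi.add_apply, Ev_apply] <;> split_ifs <;> norm_num <;> omega
lemma posB_eq_add {n : ℕ} {v : ℕ → ℝ} (h : v ∈ posB n) (a b : ℕ) (hab : a ≠ b)
    (ha : v a = 1) (hb : v b = 1) : v = Ev a + Ev b := by
  rcases h with ⟨i,j,hi,hij,hj,hv|hv⟩|⟨i,hi,hin,hv⟩ <;> subst hv <;>
    simp only [Pi.sub_apply, Pi.add_apply, Ev_apply] at ha hb <;>
    split_ifs at ha hb <;> (try norm_num at ha) <;> (try norm_num at hb) <;>
    first
      | omega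
      | (ext k; simp only [Pi.add_apply, Pi.sub_apply, Ev_apply];
         split_ifs <;> norm_num <;> omega)
lemma posB_eq_sub {n : ℕ} {v : ℕ → ℝ} (h : v ∈ posB n) (a b : ℕ)
    (ha : v a = 1) (hb : v b = -1) : v = Ev a - Ev b := by
  rcases h with ⟨i,j,hi,hij,hj,hv|hv⟩|⟨i,hi,hin,hv⟩ <;> subst hv <;>
    simp only [Pi.sub_apply, Pi.add_apply, Ev_apply] at ha hb <;>
    split_ifs at ha hb <;> (try norm_num at ha) <;> (try norm_num at hb) <;>
    first
      | omega
      | (ext k; simp only [Pi.add_apply, Pi.sub_apply, Ev_apply];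
         split_ifs <;> norm_num <;> omega)
lemma posB_eq_single {n : ℕ} {v : ℕ → ℝ} (h : v ∈ posB n) (a : ℕ)
    (ha : v a = 1) (hz : ∀ k, 1 ≤ k → k ≤ n → k ≠ a → v k = 0) : v = Ev a := by
  rcases h with ⟨i,j,hi,hij,hj,hv|hv⟩|⟨i,hi,hin,hv⟩ <;> subst hv
  · exfalso
    have hji : j ≠ i := by omega
    have := hz j (by omega) hj
    simp only [Pi.sub_apply, Ev_apply] at ha this
    split_ifs at ha this <;> (try norm_num at ha) <;> (try norm_num at this) <;> omega
  · exfalso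
    have hji : j ≠ i := by omega
    by_cases hja : j = a
    · subst hja
      have := hz i (by omega) (by omega) (by omega)
      simp only [Pi.add_apply, Ev_apply] at this
      split_ifs at this <;> norm_num at this
    · have := hz j (by omega) hj hja
      simp only [Pi.add_apply, Ev_apply] at this
      split_ifs at this <;> norm_num at this
  · simp only [Ev_apply] at ha
    split_ifs at ha with h1
    · rw [h1]
    · norm_num at ha
lemma psi_apply (n i k : ℕ) (hi : 1 ≤ i) (hin : i ≤ n) :
    ψB n i k = (if k = i then (1:ℝ) else 0) - (if k = i + 1 ∧ i < n then 1 else 0) := by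
  unfold ψB
  split_ifs with h1 h2 h3 h4 h5 h6 h7 <;>
    simp only [Ev_apply, Pi.sub_apply] <;> split_ifs <;> norm_num <;> omega
lemma sum_psi_apply (n : ℕ) (c : ℕ → ℕ) (k : ℕ) (hk1 : 1 ≤ k) (hkn : k ≤ n) :
    (∑ i ∈ Finset.Icc 1 n, (c i : ℝ) • ψB n i) k
      = (c k : ℝ) - (if 2 ≤ k then (c (k-1) : ℝ) else 0) := by
  rw [Finset.sum_apply]
  have : ∀ i ∈ Finset.Icc 1 n, ((c i : ℝ) • ψB n i) k
      = (c i : ℝ) * (if k = i then (1:ℝ) else 0)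
        - (c i : ℝ) * (if k = i + 1 ∧ i < n then 1 else 0) := by
    intro i hi
    rw [Finset.mem_Icc] at hi
    rw [Pi.smul_apply, smul_eq_mul, psi_apply n i k hi.1 hi.2, mul_sub]
  rw [Finset.sum_congr rfl this, Finset.sum_sub_distrib]
  congr 1
  · rw [Finset.sum_eq_single k]
    · simp
    · intro b _ hb; simp [Ne.symm hb]
    · intro h; exact absurd (Finset.mem_Icc.2 ⟨hk1, hkn⟩) h
  · by_cases hk2 : 2 ≤ k
    · rw [if_pos hk2, Finset.sum_eq_single (k-1)]
      · rw [if_pos ⟨by omega, by omega⟩, mul_one]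
      · intro b _ hb; rw [if_neg (by omega), mul_zero]
      · intro h; exact absurd (Finset.mem_Icc.2 ⟨by omega, by omega⟩) h
    · rw [if_neg hk2, Finset.sum_eq_zero]
      intro b hb; rw [Finset.mem_Icc] at hb; rw [if_neg (by omega), mul_zero]
lemma ip_β_apply_odd (n s : ℕ) (hs : s % 2 = 1) (hsn : s < n) (α : ℕ → ℝ) :
    ip n α (βB n s) = α s + α (s + 1) := by
  rw [βB_odd_lt n s hs hsn, ip_add_right, ip_Ev_right n s (by omega),
    ip_Ev_right n (s+1) (by omega)]
lemma ip_β_apply_even (n s : ℕ) (hs : s % 2 = 0) (hs2 : 2 ≤ s) (hsn : s ≤ n) (α : ℕ → ℝ) :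
    ip n α (βB n s) = α (s - 1) - α s := by
  rw [βB_even n s hs hs2 hsn, ip_sub_right, ip_Ev_right n (s-1) (by omega),
    ip_Ev_right n s (by omega)]
lemma pair_zero (n r : ℕ) (hrn : r ≤ n) (α : ℕ → ℝ)
    (h : ∀ s, 1 ≤ s → s < r → ip n α (βB n s) = 0) :
    ∀ k, k % 2 = 1 → k + 1 < r → α k = 0 ∧ α (k + 1) = 0 := by
  intro k hk hk1
  have h1 := h k (by omega) (by omega)
  have h2 := h (k+1) (by omega) (by omega)
  rw [ip_β_apply_odd n k hk (by omega)] at h1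
  rw [ip_β_apply_even n (k+1) (by omega) (by omega) (by omega)] at h2
  simp only [Nat.add_sub_cancel] at h2
  constructor <;> linarith
lemma coords_zero_lt (n r : ℕ) (hrn : r ≤ n) (α : ℕ → ℝ)
    (h : ∀ s, 1 ≤ s → s < r → ip n α (βB n s) = 0) (hr : r % 2 = 1) :
    ∀ k, 1 ≤ k → k < r → α k = 0 := by
  intro k hk1 hkr
  rcases Nat.even_or_odd k with he | ho
  · have hke : k % 2 = 0 := Nat.even_iff.1 he
    have hk2 : 2 ≤ k := by omega
    have := pair_zero n r hrn α h (k-1) (by omega) (by omega)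
    have h3 : k - 1 + 1 = k := by omega
    rw [h3] at this; exact this.2
  · have hko : k % 2 = 1 := Nat.odd_iff.1 ho
    exact (pair_zero n r hrn α h k hko (by omega)).1
lemma coords_zero_even (n r : ℕ) (hrn : r ≤ n) (hr2 : 2 ≤ r) (α : ℕ → ℝ)
    (h : ∀ s, 1 ≤ s → s < r → ip n α (βB n s) = 0) (hr : r % 2 = 0) :
    (∀ k, 1 ≤ k → k < r - 1 → α k = 0) ∧ α (r - 1) + α r = 0 := by
  constructor
  · intro k hk1 hkr
    rcases Nat.even_or_odd k with he | ho
    · have hke : k % 2 = 0 := Nat.even_iff.1 he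
      have hk2 : 2 ≤ k := by omega
      have := pair_zero n r hrn α h (k-1) (by omega) (by omega)
      have h3 : k - 1 + 1 = k := by omega
      rw [h3] at this; exact this.2
    · have hko : k % 2 = 1 := Nat.odd_iff.1 ho
      exact (pair_zero n r hrn α h k hko (by omega)).1
  · have h1 := h (r-1) (by omega) (by omega)
    rw [ip_β_apply_odd n (r-1) (by omega) (by omega)] at h1
    have h3 : r - 1 + 1 = r := by omega
    rw [h3] at h1; exact h1
lemma posB_coord_cases {n : ℕ} {v : ℕ → ℝ} (h : v ∈ posB n) (k : ℕ) :
    v k = -1 ∨ v k = 0 ∨ v k = 1 := by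
  rcases h with ⟨i,j,hi,hij,hj,hv|hv⟩|⟨i,hi,hin,hv⟩ <;> subst hv <;>
    simp only [Pi.sub_apply, Pi.add_apply, Ev_apply] <;> split_ifs <;> norm_num <;> omega
lemma posB_not_two_neg {n : ℕ} {v : ℕ → ℝ} (h : v ∈ posB n) (a b : ℕ) (hab : a ≠ b)
    (ha : v a = -1) (hb : v b = -1) : False := by
  rcases h with ⟨i,j,hi,hij,hj,hv|hv⟩|⟨i,hi,hin,hv⟩ <;> subst hv <;>
    simp only [Pi.sub_apply, Pi.add_apply, Ev_apply] at ha hb <;>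
    split_ifs at ha hb <;> (try norm_num at ha) <;> (try norm_num at hb) <;> omega
lemma beta_mem (n r : ℕ) (hn : 1 ≤ n) (hr1 : 1 ≤ r) (hr2 : r ≤ n) : βB n r ∈ posB n := by
  rcases Nat.even_or_odd r with he | ho
  · have hre : r % 2 = 0 := Nat.even_iff.1 he
    have h2 : 2 ≤ r := by omega
    rw [βB_even n r hre h2 hr2]
    exact Or.inl ⟨r-1, r, by omega, by omega, hr2, Or.inl rfl⟩
  · have hro : r % 2 = 1 := Nat.odd_iff.1 ho
    by_cases hrn : r = n
    · subst hrn
      rw [βB_odd_eq r hro]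
      exact Or.inr ⟨r, hr1, le_refl r, rfl⟩
    · rw [βB_odd_lt n r hro (by omega)]
      exact Or.inl ⟨r, r+1, hr1, by omega, by omega, Or.inr rfl⟩
lemma beta_orth (n r s : ℕ) (hr1 : 1 ≤ r) (hr2 : r ≤ n) (hs1 : 1 ≤ s) (hsr : s < r) :
    ip n (βB n r) (βB n s) = 0 := by
  have hβr : ∀ k, 1 ≤ k → k ≤ n →
      (r % 2 = 0 → (βB n r k = if k = r - 1 then 1 else if k = r then -1 else 0)) ∧
      (r % 2 = 1 → (βB n r k = if k = r ∨ k = r + 1 then 1 else 0)) := by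
    intro k hk1 hkn
    constructor
    · intro hre
      rw [βB_even n r hre (by omega) hr2]
      simp only [Pi.sub_apply, Ev_apply]
      split_ifs <;> norm_num <;> omega
    · intro hro
      by_cases hrn : r = n
      · subst hrn
        rw [βB_odd_eq r hro]
        simp only [Ev_apply]
        split_ifs <;> norm_num <;> omega
      · rw [βB_odd_lt n r hro (by omega)]
        simp only [Pi.add_apply, Ev_apply]
        split_ifs <;> norm_num <;> omega
  rcases Nat.even_or_odd s with hse | hso
  · have hse' : s % 2 = 0 := Nat.even_iff.1 hse
    rw [ip_β_apply_even n s hse' (by omega) (by omega)]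
    rcases Nat.even_or_odd r with hre | hro
    · have hre' : r % 2 = 0 := Nat.even_iff.1 hre
      rw [((hβr (s-1) (by omega) (by omega)).1 hre'), ((hβr s (by omega) (by omega)).1 hre')]
      split_ifs <;> norm_num <;> omega
    · have hro' : r % 2 = 1 := Nat.odd_iff.1 hro
      rw [((hβr (s-1) (by omega) (by omega)).2 hro'), ((hβr s (by omega) (by omega)).2 hro')]
      split_ifs <;> norm_num <;> omega
  · have hso' : s % 2 = 1 := Nat.odd_iff.1 hso
    rw [ip_β_apply_odd n s hso' (by omega)]
    rcases Nat.even_or_odd r with hre | hro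
    · have hre' : r % 2 = 0 := Nat.even_iff.1 hre
      rw [((hβr s (by omega) (by omega)).1 hre'), ((hβr (s+1) (by omega) (by omega)).1 hre')]
      split_ifs <;> norm_num <;> omega
    · have hro' : r % 2 = 1 := Nat.odd_iff.1 hro
      rw [((hβr s (by omega) (by omega)).2 hro'), ((hβr (s+1) (by omega) (by omega)).2 hro')]
      split_ifs <;> norm_num <;> omega
lemma maximality (n r : ℕ) (hn : 1 ≤ n) (hr1 : 1 ≤ r) (hr2 : r ≤ n)
    (α : ℕ → ℝ) (hα : α ∈ posB n)
    (horth : ∀ s, 1 ≤ s → s < r → ip n α (βB n s) = 0)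
    (c : ℕ → ℕ) (hc : α = βB n r + ∑ i ∈ Finset.Icc 1 n, (c i : ℝ) • ψB n i) :
    α = βB n r := by
  have happ : ∀ k, 1 ≤ k → k ≤ n →
      α k = βB n r k + ((c k : ℝ) - (if 2 ≤ k then (c (k-1) : ℝ) else 0)) := by
    intro k h1 h2
    have := congrFun hc k
    rw [Pi.add_apply, sum_psi_apply n c k h1 h2] at this
    exact this
  rcases Nat.even_or_odd r with hre | hro
  · -- r even
    have hre' : r % 2 = 0 := Nat.even_iff.1 hre
    have hr2' : 2 ≤ r := by omega
    have hβ : βB n r = Ev (r-1) - Ev r := βB_even n r hre' hr2' hr2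
    obtain ⟨hz, hsum⟩ := coords_zero_even n r hr2 hr2' α horth hre'
    have hβz : ∀ k, 1 ≤ k → k < r - 1 → βB n r k = 0 := by
      intro k h1 h2
      rw [hβ]; simp only [Pi.sub_apply, Ev_apply]
      split_ifs <;> norm_num <;> omega
    -- c k = 0 for k ≤ r - 2
    have hcz : ∀ k, k ≤ r - 2 → c k = 0 ∨ k = 0 := by
      intro k
      induction k with
      | zero => intro _; exact Or.inr rfl
      | succ m ih =>
        intro hm
        left
        have h1 : (1:ℕ) ≤ m + 1 := by omega
        have e := happ (m+1) h1 (by omega)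
        rw [hβz (m+1) h1 (by omega), hz (m+1) h1 (by omega)] at e
        by_cases hm2 : 2 ≤ m + 1
        · rw [if_pos hm2] at e
          have : c m = 0 := by rcases ih (by omega) with h | h; exact h; omega
          simp only [Nat.add_sub_cancel, this, Nat.cast_zero] at e
          have : (c (m+1) : ℝ) = 0 := by linarith
          exact_mod_cast this
        · rw [if_neg hm2] at e
          have : (c (m+1) : ℝ) = 0 := by linarith
          exact_mod_cast this
    have hβr1 : βB n r (r-1) = 1 := by
      rw [hβ]; simp only [Pi.sub_apply, Ev_apply]
      split_ifs <;> norm_num <;> omega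
    have hβr : βB n r r = -1 := by
      rw [hβ]; simp only [Pi.sub_apply, Ev_apply]
      split_ifs <;> norm_num <;> omega
    have e1 := happ (r-1) (by omega) (by omega)
    have e2 := happ r (by omega) (by omega)
    rw [hβr1] at e1
    rw [hβr] at e2
    have hr1e : r - 1 - 1 = r - 2 := by omega
    have hr1e2 : r - 1 + 1 = r := by omega
    -- simplify e1
    have e1' : α (r-1) = 1 + (c (r-1) : ℝ) := by
      by_cases h22 : 2 ≤ r - 1
      · rw [if_pos h22, hr1e] at e1
        have : c (r-2) = 0 := by rcases hcz (r-2) (le_refl _) with h | h; exact h; omega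
        rw [this] at e1; push_cast at e1 ⊢; linarith
      · rw [if_neg h22] at e1; linarith
    have e2' : α r = -1 + (c r : ℝ) - (c (r-1) : ℝ) := by
      rw [if_pos hr2'] at e2; linarith
    have hcr : (c r : ℝ) = 0 := by linarith
    have hge := posB_coord_ge hα r
    have hcr1 : (c (r-1) : ℝ) = 0 := by
      have : (0:ℝ) ≤ (c (r-1) : ℝ) := Nat.cast_nonneg _
      linarith
    have ha1 : α (r-1) = 1 := by rw [e1', hcr1]; ring
    have ha2 : α r = -1 := by rw [e2', hcr, hcr1]; ring
    rw [posB_eq_sub hα (r-1) r ha1 ha2, hβ]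
  · -- r odd
    have hro' : r % 2 = 1 := Nat.odd_iff.1 hro
    have hz := coords_zero_lt n r hr2 α horth hro'
    have hβz : ∀ k, 1 ≤ k → k < r → βB n r k = 0 := by
      intro k h1 h2
      by_cases hrn : r = n
      · subst hrn
        rw [βB_odd_eq r hro']; simp only [Ev_apply]
        split_ifs <;> norm_num <;> omega
      · rw [βB_odd_lt n r hro' (by omega)]; simp only [Pi.add_apply, Ev_apply]
        split_ifs <;> norm_num <;> omega
    have hcz : ∀ k, k ≤ r - 1 → c k = 0 ∨ k = 0 := by
      intro k
      induction k with
      | zero => intro _; exact Or.inr rfl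
      | succ m ih =>
        intro hm
        left
        have h1 : (1:ℕ) ≤ m + 1 := by omega
        have e := happ (m+1) h1 (by omega)
        rw [hβz (m+1) h1 (by omega), hz (m+1) h1 (by omega)] at e
        by_cases hm2 : 2 ≤ m + 1
        · rw [if_pos hm2] at e
          have : c m = 0 := by rcases ih (by omega) with h | h; exact h; omega
          simp only [Nat.add_sub_cancel, this, Nat.cast_zero] at e
          have : (c (m+1) : ℝ) = 0 := by linarith
          exact_mod_cast this
        · rw [if_neg hm2] at e
          have : (c (m+1) : ℝ) = 0 := by linarith
          exact_mod_cast this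
    have hcr1 : (c (r-1) : ℝ) = 0 ∨ r = 1 := by
      rcases hcz (r-1) (le_refl _) with h | h
      · left; exact_mod_cast h
      · right; omega
    have er : α r = 1 + (c r : ℝ) := by
      have e := happ r hr1 hr2
      have hβr : βB n r r = 1 := by
        by_cases hrn : r = n
        · subst hrn; rw [βB_odd_eq r hro']; simp [Ev_apply]
        · rw [βB_odd_lt n r hro' (by omega)]; simp only [Pi.add_apply, Ev_apply]
          split_ifs <;> norm_num <;> omega
      rw [hβr] at e
      by_cases h22 : 2 ≤ r
      · rw [if_pos h22] at e
        rcases hcr1 with h | h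
        · rw [h] at e; linarith
        · omega
      · rw [if_neg h22] at e; linarith
    have hle := posB_coord_le_one hα r
    have hcr : (c r : ℝ) = 0 := by
      have : (0:ℝ) ≤ (c r : ℝ) := Nat.cast_nonneg _
      linarith
    have har : α r = 1 := by rw [er, hcr]; ring
    by_cases hrn : r = n
    · subst hrn
      rw [βB_odd_eq r hro']
      exact posB_eq_single hα r har (fun k h1 h2 h3 => hz k h1 (by omega))
    · -- r < n
      have hrn' : r < n := by omega
      have er1 : α (r+1) = 1 + (c (r+1) : ℝ) := by
        have e := happ (r+1) (by omega) (by omega)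
        have hβr : βB n r (r+1) = 1 := by
          rw [βB_odd_lt n r hro' hrn']; simp only [Pi.add_apply, Ev_apply]
          split_ifs <;> norm_num <;> omega
        rw [hβr, if_pos (by omega : 2 ≤ r + 1)] at e
        simp only [Nat.add_sub_cancel] at e
        rw [hcr] at e; linarith
      have hle1 := posB_coord_le_one hα (r+1)
      have hcr1' : (c (r+1) : ℝ) = 0 := by
        have : (0:ℝ) ≤ (c (r+1) : ℝ) := Nat.cast_nonneg _
        linarith
      have har1 : α (r+1) = 1 := by rw [er1, hcr1']; ring
      rw [posB_eq_add hα r (r+1) (by omega) har har1, βB_odd_lt n r hro' hrn']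
lemma layer_even_empty (n r : ℕ) (hn : 1 ≤ n) (hr1 : 1 ≤ r) (hr2 : r ≤ n)
    (hre : r % 2 = 0) : LayerB n r = ∅ := by
  ext α
  simp only [LayerB, Set.mem_setOf_eq, Set.mem_empty_iff_false, iff_false, not_and]
  rintro hpos horth hip hne
  have hr2' : 2 ≤ r := by omega
  obtain ⟨hz, hsum⟩ := coords_zero_even n r hr2 hr2' α horth hre
  rw [ip_β_apply_even n r hre hr2' hr2] at hip
  have h1 : 0 < α (r-1) := by linarith
  rcases posB_coord_cases hpos (r-1) with h | h | h
  · linarith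
  · linarith
  · have h2 : α r = -1 := by linarith
    exact hne (by rw [posB_eq_sub hpos (r-1) r h h2, βB_even n r hre hr2' hr2])
lemma layer_coord_sum (n r : ℕ) (hro : r % 2 = 1) (hrn : r < n) (α : ℕ → ℝ)
    (hα : α ∈ LayerB n r) : α r + α (r+1) = 1 := by
  simp only [LayerB, Set.mem_setOf_eq] at hα
  obtain ⟨hpos, horth, hip, hne⟩ := hα
  rw [ip_β_apply_odd n r hro hrn] at hip
  rcases posB_coord_cases hpos r with h1 | h1 | h1 <;>
    rcases posB_coord_cases hpos (r+1) with h2 | h2 | h2 <;>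
      rw [h1, h2] <;> rw [h1, h2] at hip <;> try linarith
  exfalso
  exact hne (by rw [posB_eq_add hpos r (r+1) (by omega) h1 h2, βB_odd_lt n r hro hrn])
lemma layer_odd (n r : ℕ) (hn : 1 ≤ n) (hr1 : 1 ≤ r) (hr2 : r ≤ n) (hro : r % 2 = 1)
    (α : ℕ → ℝ) (hα : α ∈ LayerB n r) (α' : ℕ → ℝ) (hα' : α' ∈ LayerB n r)
    (hsum : α + α' ∈ ΔB n) : α + α' = βB n r := by
  by_cases hrn : r = n
  · -- impossible: (α+α') n = 2
    exfalso
    subst hrn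
    simp only [LayerB, Set.mem_setOf_eq] at hα hα'
    obtain ⟨hpos, horth, hip, hne⟩ := hα
    obtain ⟨hpos', horth', hip', hne'⟩ := hα'
    rw [βB_odd_eq r hro, ip_Ev_right r r (le_refl r)] at hip hip'
    have h1 : α r = 1 := by
      rcases posB_coord_cases hpos r with h | h | h <;> first | linarith | exact h
    have h2 : α' r = 1 := by
      rcases posB_coord_cases hpos' r with h | h | h <;> first | linarith | exact h
    rcases hsum with hw | hw
    · have := posB_coord_le_one hw r
      rw [Pi.add_apply, h1, h2] at this; linarith
    · have := posB_coord_ge hw r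
      rw [Pi.neg_apply, Pi.add_apply, h1, h2] at this; linarith
  · have hrn' : r < n := by omega
    have s1 := layer_coord_sum n r hro hrn' α hα
    have s2 := layer_coord_sum n r hro hrn' α' hα'
    have hw2 : (α + α') r + (α + α') (r+1) = 2 := by
      simp only [Pi.add_apply]; linarith
    rw [βB_odd_lt n r hro hrn']
    rcases hsum with hw | hw
    · have c1 := posB_coord_le_one hw r
      have c2 := posB_coord_le_one hw (r+1)
      have h1 : (α + α') r = 1 := by linarith
      have h2 : (α + α') (r+1) = 1 := by linarith
      exact posB_eq_add hw r (r+1) (by omega) h1 h2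
    · exfalso
      have c1 := posB_coord_ge hw r
      have c2 := posB_coord_ge hw (r+1)
      rw [Pi.neg_apply] at c1 c2
      have h1 : (-(α + α')) r = -1 := by simp only [Pi.neg_apply]; linarith
      have h2 : (-(α + α')) (r+1) = -1 := by simp only [Pi.neg_apply]; linarith
      exact posB_not_two_neg hw r (r+1) (by omega) h1 h2

/-- In type `B_n` the Kostant cascade is `β_1 = ψ_1 + 2(ψ_2 + ⋯ + ψ_n)`, `β_2 = ψ_1`,
`β_3 = ψ_3 + 2(ψ_4 + ⋯ + ψ_n)`, `β_4 = ψ_3`, and so on; for even `r` the layer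
`Δ⁺_r` is empty, and for odd `r`, if `α, α' ∈ Δ⁺_r` and `α + α'` is a root then
`α + α' = β_r`. -/
theorem stmt18 (n r : ℕ) (hn : 1 ≤ n) (hr1 : 1 ≤ r) (hr2 : r ≤ n) :
    βB n r ∈ posB n ∧
    (∀ s : ℕ, 1 ≤ s → s < r → ip n (βB n r) (βB n s) = 0) ∧
    -- β_r is maximal among positive roots orthogonal to β_1, …, β_{r-1}
    (∀ α ∈ posB n, (∀ s : ℕ, 1 ≤ s → s < r → ip n α (βB n s) = 0) →
      (∃ c : ℕ → ℕ, α = βB n r + ∑ i ∈ Finset.Icc 1 n, (c i : ℝ) • ψB n i) →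
        α = βB n r) ∧
    (r % 2 = 0 → LayerB n r = ∅) ∧
    (r % 2 = 1 → ∀ α ∈ LayerB n r, ∀ α' ∈ LayerB n r,
      α + α' ∈ ΔB n → α + α' = βB n r) := by
  refine ⟨beta_mem n r hn hr1 hr2, ?_, ?_, ?_, ?_⟩
  · intro s hs1 hs2; exact beta_orth n r s hr1 hr2 hs1 hs2
  · rintro α hα horth ⟨c, hc⟩
    exact maximality n r hn hr1 hr2 α hα horth c hc
  · intro hre; exact layer_even_empty n r hn hr1 hr2 hre
  · intro hro α hα α' hα' hsum
    exact layer_odd n r hn hr1 hr2 hro α hα α' hα' hsum
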